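/- For every integer N ≥ 2, the number of finite sequences (a₁, …, aₙ) of positive integers (n ≥ 1) with last term aₙ ≥ 2 and continuant K(a₁, …, aₙ) = N is equal to Euler's totient function φ(N). (Via the bijection between such sequences and snake graphs, this says that the number of snake graphs having precisely N perfect matchings equals φ(N).) -/
import Mathlib


/-- Auxiliary function for the continuant: `contAux` applied to the reversed list realizes
the recursion `K(a₁,…,aₙ) = aₙ·K(a₁,…,aₙ₋₁) + K(a₁,…,aₙ₋₂)`, `K() = 1`, `K(a₁) = a₁`. -/
def contAux : List ℕ → ℕ
  | [] => 1
  | [a] => a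
  | a :: b :: t => a * contAux (b :: t) + contAux t

/-- The continuant `K(a₁,…,aₙ)` of a list of natural numbers. -/
def continuant (l : List ℕ) : ℕ := contAux l.reverse

def Eaux : List ℕ → ℕ
  | [] => 0
  | a :: t => contAux ((a :: t).dropLast)

lemma Eaux_ne_nil {l : List ℕ} (h : l ≠ []) : Eaux l = contAux l.dropLast := by
  cases l with
  | nil => simp at h
  | cons a t => rfl

lemma Eaux_cons_cons (b c : ℕ) (t : List ℕ) :
    Eaux (b :: c :: t) = b * Eaux (c :: t) + Eaux t := by
  cases t with
  | nil => simp [Eaux, contAux]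
  | cons d s =>
      simp only [Eaux]
      rw [show ((b :: c :: d :: s).dropLast) = b :: c :: (d :: s).dropLast from rfl,
          show ((c :: d :: s).dropLast) = c :: (d :: s).dropLast from rfl]
      cases h : (d :: s).dropLast with
      | nil => simp [contAux, h]
      | cons x y => simp [contAux, h]

lemma contAux_append_singleton (l : List ℕ) (a : ℕ) :
    contAux (l ++ [a]) = a * contAux l + Eaux l := by
  induction l using contAux.induct with
  | case1 => simp [contAux, Eaux]
  | case2 b => simp [contAux, Eaux]; ring
  | case3 b c t ih1 ih2 =>
      show contAux (b :: c :: (t ++ [a])) = _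
      rw [show contAux (b :: c :: (t ++ [a]))
            = b * contAux (c :: (t ++ [a])) + contAux (t ++ [a]) from rfl]
      rw [show (c :: (t ++ [a])) = (c :: t) ++ [a] from rfl] at *
      rw [ih1, ih2, Eaux_cons_cons]
      rw [show contAux (b :: c :: t) = b * contAux (c :: t) + contAux t from rfl]
      ring

lemma contAux_reverse (l : List ℕ) : contAux l.reverse = contAux l := by
  induction l using contAux.induct with
  | case1 => rfl
  | case2 b => rfl
  | case3 a b t ih1 ih2 =>
      have h1 : (a :: b :: t).reverse = (b :: t).reverse ++ [a] := by simp
      rw [h1, contAux_append_singleton, ih1,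
        Eaux_ne_nil (by simp : (b :: t).reverse ≠ [])]
      have h2 : (b :: t).reverse.dropLast = t.reverse := by
        rw [show (b :: t).reverse = t.reverse ++ [b] by simp, List.dropLast_concat]
      rw [h2, ih2]
      rfl

lemma contAux_cons {a : ℕ} {t : List ℕ} (ht : t ≠ []) :
    contAux (a :: t) = a * contAux t + contAux t.tail := by
  cases t with
  | nil => simp at ht
  | cons b s => rfl

def decode : ℕ → ℕ → List ℕ
  | p, 0 => [p]
  | p, 1 => [p]
  | p, q + 2 => p / (q + 2) :: decode (q + 2) (p % (q + 2))
termination_by p q => q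
decreasing_by exact Nat.mod_lt _ (by omega)

lemma decode_one (p : ℕ) : decode p 1 = [p] := by rw [decode]

lemma decode_of_two_le (p q : ℕ) (hq : 2 ≤ q) :
    decode p q = p / q :: decode q (p % q) := by
  obtain ⟨r, rfl⟩ : ∃ r, q = r + 2 := ⟨q - 2, by omega⟩
  rw [decode]

lemma encode_spec : ∀ l : List ℕ, l ≠ [] → (∀ x ∈ l, 0 < x) →
    (∀ x, l.getLast? = some x → 2 ≤ x) →
    1 ≤ contAux l.tail ∧ contAux l.tail < contAux l ∧
      Nat.gcd (contAux l) (contAux l.tail) = 1 ∧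
      decode (contAux l) (contAux l.tail) = l := by
  intro l
  induction l with
  | nil => intro h; simp at h
  | cons a t ih =>
      intro _ hpos hlast
      cases t with
      | nil =>
          have ha : 2 ≤ a := hlast a (by simp)
          refine ⟨by simp [contAux], by simp [contAux]; omega, by simp [contAux], ?_⟩
          exact decode_one a
      | cons b s =>
          have ht : (b :: s : List ℕ) ≠ [] := by simp
          obtain ⟨hQ1, hQP, hcop, hdec⟩ := ih ht (fun x hx => hpos x (by simp [hx]))
            (fun x hx => hlast x (by rw [List.getLast?_cons_cons]; exact hx))
          set P := contAux (b :: s) with hPdef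
          set Q := contAux (b :: s).tail with hQdef
          have ha : 1 ≤ a := hpos a (by simp)
          have key : contAux (a :: b :: s) = a * P + Q := contAux_cons ht
          have htail : (a :: b :: s).tail = b :: s := rfl
          have hP2 : 2 ≤ P := by omega
          refine ⟨?_, ?_, ?_, ?_⟩
          · rw [htail]; omega
          · rw [htail, key]; nlinarith
          · rw [htail, key, add_comm (a * P) Q, Nat.gcd_add_mul_right_left, Nat.gcd_comm]
            exact hcop
          · rw [htail, key, decode_of_two_le _ _ hP2]
            have hdiv : (a * P + Q) / P = a := by
              rw [add_comm, mul_comm, Nat.add_mul_div_left _ _ (by omega : 0 < P),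
                Nat.div_eq_of_lt hQP]
              omega
            have hmod : (a * P + Q) % P = Q := by
              rw [mul_comm, Nat.mul_add_mod, Nat.mod_eq_of_lt hQP]
            rw [hdiv, hmod, hdec]

lemma decode_spec : ∀ q p : ℕ, 1 ≤ q → q < p → Nat.gcd p q = 1 →
    decode p q ≠ [] ∧ (∀ x ∈ decode p q, 0 < x) ∧
      (∀ x, (decode p q).getLast? = some x → 2 ≤ x) ∧
      contAux (decode p q) = p ∧ contAux (decode p q).tail = q := by
  intro q
  induction q using Nat.strong_induction_on with
  | _ q ih =>
      intro p hq1 hqp hcop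
      rcases eq_or_lt_of_le hq1 with h1 | h2
      · -- q = 1
        have hq : q = 1 := h1.symm
        subst hq
        rw [decode_one]
        refine ⟨by simp, by intro x hx; simp at hx; omega, ?_, by simp [contAux], by simp [contAux]⟩
        intro x hx
        simp at hx; omega
      · -- 2 ≤ q
        have hq2 : 2 ≤ q := h2
        set a := p / q with hadef
        set r := p % q with hrdef
        have hrq : r < q := Nat.mod_lt _ (by omega)
        have hr1 : 1 ≤ r := by
          rcases Nat.eq_zero_or_pos r with h0 | h0
          · exfalso
            have hdvd : q ∣ p := Nat.dvd_of_mod_eq_zero (by omega)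
            have : q ∣ Nat.gcd p q := Nat.dvd_gcd hdvd dvd_rfl
            rw [hcop] at this
            have := Nat.le_of_dvd one_pos this
            omega
          · exact h0
        have hgcd : Nat.gcd q r = 1 := by
          rw [hrdef, Nat.gcd_comm, ← Nat.gcd_rec, Nat.gcd_comm]
          exact hcop
        obtain ⟨hne, hpos, hlast, hc, hct⟩ := ih r hrq q hr1 hrq hgcd
        have ha1 : 1 ≤ a := (Nat.one_le_div_iff (by omega)).mpr (le_of_lt hqp)
        have hd : decode p q = a :: decode q r := decode_of_two_le p q hq2
        rw [hd]
        refine ⟨by simp, ?_, ?_, ?_, ?_⟩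
        · intro x hx
          rcases List.mem_cons.mp hx with h | h
          · omega
          · exact hpos x h
        · intro x hx
          obtain ⟨b, s, hbs⟩ := List.exists_cons_of_ne_nil hne
          rw [hbs] at hx
          have hx2 : (b :: s).getLast? = some x := by
            rwa [List.getLast?_cons_cons] at hx
          exact hlast x (by rw [hbs]; exact hx2)
        · rw [contAux_cons hne, hc, hct]
          rw [hadef, hrdef]
          rw [mul_comm]
          exact Nat.div_add_mod p q
        · simpa using hc

/-- For every `N ≥ 2`, the number of nonempty finite sequences `(a₁,…,aₙ)`
of positive integers with last term `aₙ ≥ 2` and continuant `K(a₁,…,aₙ) = N` equals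
Euler's totient `φ(N)`; equivalently, the number of snake graphs with precisely `N`
perfect matchings is `φ(N)`. -/
theorem card_continuant_eq_totient (N : ℕ) (hN : 2 ≤ N) :
    Nat.card {l : List ℕ // l ≠ [] ∧ (∀ x ∈ l, 0 < x) ∧
      (∀ x, l.getLast? = some x → 2 ≤ x) ∧ continuant l = N} = Nat.totient N := by
  have hcont : ∀ l : List ℕ, continuant l = contAux l := fun l => contAux_reverse l
  have e : {l : List ℕ // l ≠ [] ∧ (∀ x ∈ l, 0 < x) ∧
      (∀ x, l.getLast? = some x → 2 ≤ x) ∧ continuant l = N} ≃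
      {q : ℕ // q ∈ Finset.filter N.Coprime (Finset.range N)} := by
    refine
      { toFun := fun l => ⟨contAux l.1.tail, ?_⟩
        invFun := fun q => ⟨decode N q.1, ?_⟩
        left_inv := ?_
        right_inv := ?_ }
    · obtain ⟨l, h1, h2, h3, h4⟩ := l
      rw [hcont] at h4
      obtain ⟨hq1, hqp, hgcd, hdec⟩ := encode_spec l h1 h2 h3
      rw [h4] at hqp hgcd
      simp only [Finset.mem_filter, Finset.mem_range]
      exact ⟨hqp, hgcd⟩
    · obtain ⟨q, hq⟩ := q
      simp only [Finset.mem_filter, Finset.mem_range] at hq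
      obtain ⟨hqN, hcop⟩ := hq
      have hq1 : 1 ≤ q := by
        rcases Nat.eq_zero_or_pos q with h0 | h0
        · subst h0; rw [Nat.coprime_zero_right] at hcop; omega
        · exact h0
      obtain ⟨hne, hpos, hlast, hc, hct⟩ := decode_spec q N hq1 hqN hcop
      exact ⟨hne, hpos, hlast, by rw [hcont]; exact hc⟩
    · rintro ⟨l, h1, h2, h3, h4⟩
      rw [hcont] at h4
      obtain ⟨hq1, hqp, hgcd, hdec⟩ := encode_spec l h1 h2 h3
      rw [h4] at hdec
      exact Subtype.ext hdec
    · rintro ⟨q, hq⟩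
      simp only [Finset.mem_filter, Finset.mem_range] at hq
      obtain ⟨hqN, hcop⟩ := hq
      have hq1 : 1 ≤ q := by
        rcases Nat.eq_zero_or_pos q with h0 | h0
        · subst h0; rw [Nat.coprime_zero_right] at hcop; omega
        · exact h0
      obtain ⟨hne, hpos, hlast, hc, hct⟩ := decode_spec q N hq1 hqN hcop
      exact Subtype.ext hct
  rw [Nat.card_congr e, Nat.card_eq_finsetCard, Nat.totient]
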